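/- Under the hypotheses of the previous statement (Z-values linearly dependent, ⟨vᵢ²⟩ ≥ 0), the identity ⟨v₁,v₂⟩·d₁d₂ = −½((d₁D₂ − d₂D₁)²) + d₂²⟨v₁²⟩/2 + d₁²⟨v₂²⟩/2 + (d₁r₂ − d₂r₁)²(ω²)/2 holds, and hence ⟨v₁,v₂⟩·d₁d₂ ≥ 0, with equality only if d₁v₂ = d₂v₁. -/

import Mathlib

variable {N : Type*} [AddCommGroup N] [Module ℚ N]

/-- The Mukai pairing on the rational Mukai lattice `Λ_ℚ = ℚ × N × ℚ`,
`⟨x,y⟩ = (x₁,y₁) − x₀y₂ − x₂y₀`. -/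
def mpair (B : N →ₗ[ℚ] N →ₗ[ℚ] ℚ) (x y : ℚ × N × ℚ) : ℚ :=
  B x.2.1 y.2.1 - x.1 * y.2.2 - x.2.2 * y.1

/-- `e^β = (1, β, (β,β)/2)`. -/
def mexp (B : N →ₗ[ℚ] N →ₗ[ℚ] ℚ) (β : N) : ℚ × N × ℚ :=
  (1, β, B β β / 2)

/-- The fundamental class `ϱ`. -/
def mrho : ℚ × N × ℚ := (0, 0, 1)

/-- `r_β(v) = −⟨v,ϱ⟩`. -/
def rInv (B : N →ₗ[ℚ] N →ₗ[ℚ] ℚ) (v : ℚ × N × ℚ) : ℚ :=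
  -(mpair B v mrho)

/-- `a_β(v) = −⟨v, e^β⟩`. -/
def aInv (B : N →ₗ[ℚ] N →ₗ[ℚ] ℚ) (β : N) (v : ℚ × N × ℚ) : ℚ :=
  -(mpair B v (mexp B β))

/-- `d_β(v) = ⟨v, H + (H,β)ϱ⟩ / (H,H)`. -/
def dInv (B : N →ₗ[ℚ] N →ₗ[ℚ] ℚ) (H β : N) (v : ℚ × N × ℚ) : ℚ :=
  mpair B v (0, H, B H β) / B H H

/-- `D_β(v)`, the `H`-orthogonal part of the `NS`-component of `v`. -/
def DInv (B : N →ₗ[ℚ] N →ₗ[ℚ] ℚ) (H β : N) (v : ℚ × N × ℚ) : N :=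
  v.2.1 - rInv B v • β - dInv B H β v • H

/-- The stability function `Z_{(β,ω)}(v) = ⟨e^{β+iω}, v⟩` with `ω = t•H`,
expanded as `⟨e^β,v⟩ + i⟨ω + (ω,β)ϱ, v⟩ − ((ω,ω)/2)⟨ϱ,v⟩`. -/
noncomputable def Zst (B : N →ₗ[ℚ] N →ₗ[ℚ] ℚ) (H β : N) (t : ℚ)
    (v : ℚ × N × ℚ) : ℂ :=
  ((mpair B (mexp B β) v : ℚ) : ℂ)
    + ((mpair B (0, t • H, B (t • H) β) v : ℚ) : ℂ) * Complex.I
    - ((B (t • H) (t • H) / 2 : ℚ) : ℂ) * ((mpair B mrho v : ℚ) : ℂ)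

lemma rInv_eq (B : N →ₗ[ℚ] N →ₗ[ℚ] ℚ) (v : ℚ × N × ℚ) : rInv B v = v.1 := by
  simp [rInv, mpair, mrho]

lemma aInv_eq (B : N →ₗ[ℚ] N →ₗ[ℚ] ℚ) (β : N) (v : ℚ × N × ℚ) :
    aInv B β v = v.2.2 + v.1 * B β β / 2 - B v.2.1 β := by
  simp [aInv, mpair, mexp]; ring

lemma dInv_eq (B : N →ₗ[ℚ] N →ₗ[ℚ] ℚ) (H β : N) (hH : B H H ≠ 0) (v : ℚ × N × ℚ) :
    dInv B H β v * B H H = B v.2.1 H - v.1 * B H β := by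
  rw [dInv, div_mul_cancel₀ _ hH]
  simp [mpair]

lemma DInv_orth (B : N →ₗ[ℚ] N →ₗ[ℚ] ℚ) (hB : ∀ a b : N, B a b = B b a)
    (H β : N) (hH : B H H ≠ 0) (v : ℚ × N × ℚ) :
    B (DInv B H β v) H = 0 := by
  have hd := dInv_eq B H β hH v
  simp only [DInv, rInv_eq, map_sub, map_smul, LinearMap.sub_apply, LinearMap.smul_apply,
    smul_eq_mul]
  linear_combination -hd - v.1 * hB β H

lemma mpair_decomp (B : N →ₗ[ℚ] N →ₗ[ℚ] ℚ) (hB : ∀ a b : N, B a b = B b a)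
    (H β : N) (hH : B H H ≠ 0) (v w : ℚ × N × ℚ) :
    mpair B v w = dInv B H β v * dInv B H β w * B H H
      + B (DInv B H β v) (DInv B H β w)
      - v.1 * aInv B β w - w.1 * aInv B β v := by
  have hd1 := dInv_eq B H β hH v
  have hd2 := dInv_eq B H β hH w
  simp only [DInv, rInv_eq, mpair, aInv, mexp, map_sub, map_smul, LinearMap.sub_apply,
    LinearMap.smul_apply, smul_eq_mul]
  linear_combination (-dInv B H β w) * hd1 + (-dInv B H β v) * hd2 - v.1 * dInv B H β w * hB β H + dInv B H β v * hB H w.2.1 + v.1 * hB β w.2.1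

lemma Zst_eq (B : N →ₗ[ℚ] N →ₗ[ℚ] ℚ) (hB : ∀ a b : N, B a b = B b a)
    (H β : N) (hH : B H H ≠ 0) (t : ℚ) (v : ℚ × N × ℚ) :
    Zst B H β t v
      = ((-(aInv B β v) + v.1 * (t ^ 2 * B H H) / 2 : ℚ) : ℂ)
        + ((t * dInv B H β v * B H H : ℚ) : ℂ) * Complex.I := by
  have hd := dInv_eq B H β hH v
  have h1 : mpair B (mexp B β) v = -(aInv B β v) := by
    simp only [mpair, mexp, aInv]
    linear_combination hB β v.2.1
  have h2 : mpair B (0, t • H, B (t • H) β) v = t * dInv B H β v * B H H := by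
    simp only [mpair, map_smul, LinearMap.smul_apply, smul_eq_mul]
    linear_combination -t * hd + t * hB H v.2.1
  have h3 : mpair B mrho v = -v.1 := by simp [mpair, mrho]
  have h4 : B (t • H) (t • H) = t ^ 2 * B H H := by
    simp only [map_smul, LinearMap.smul_apply, smul_eq_mul]; ring
  rw [Zst, h1, h2, h3, h4]
  push_cast
  ring

/-- Under linear dependence of the `Z`-values and `⟨vᵢ²⟩ ≥ 0`:
`⟨v₁,v₂⟩d₁d₂ = −½((d₁D₂−d₂D₁)²) + d₂²⟨v₁²⟩/2 + d₁²⟨v₂²⟩/2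
 + (d₁r₂−d₂r₁)²(ω²)/2 ≥ 0`, with equality only if `d₁v₂ = d₂v₁`. -/
theorem positivity_identity (B : N →ₗ[ℚ] N →ₗ[ℚ] ℚ)
    (hB : ∀ a b : N, B a b = B b a) (H : N) (hH : 0 < B H H)
    (hneg : ∀ x : N, B x H = 0 → x ≠ 0 → B x x < 0)
    (β : N) (t : ℚ) (ht : 0 < t)
    (v₁ v₂ : ℚ × N × ℚ) (h1 : v₁ ≠ 0) (h2 : v₂ ≠ 0)
    (hsq1 : 0 ≤ mpair B v₁ v₁) (hsq2 : 0 ≤ mpair B v₂ v₂)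
    (hdep : ¬ LinearIndependent ℝ ![Zst B H β t v₁, Zst B H β t v₂]) :
    mpair B v₁ v₂ * (dInv B H β v₁ * dInv B H β v₂)
        = -(B (dInv B H β v₁ • DInv B H β v₂ - dInv B H β v₂ • DInv B H β v₁)
              (dInv B H β v₁ • DInv B H β v₂ - dInv B H β v₂ • DInv B H β v₁)) / 2
          + dInv B H β v₂ ^ 2 * mpair B v₁ v₁ / 2
          + dInv B H β v₁ ^ 2 * mpair B v₂ v₂ / 2
          + (dInv B H β v₁ * rInv B v₂ - dInv B H β v₂ * rInv B v₁) ^ 2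
              * B (t • H) (t • H) / 2 ∧
      0 ≤ mpair B v₁ v₂ * (dInv B H β v₁ * dInv B H β v₂) ∧
      (mpair B v₁ v₂ * (dInv B H β v₁ * dInv B H β v₂) = 0 →
        dInv B H β v₁ • v₂ = dInv B H β v₂ • v₁) := by
  have hHne : B H H ≠ 0 := ne_of_gt hH
  have h4 : B (t • H) (t • H) = t ^ 2 * B H H := by
    simp only [map_smul, LinearMap.smul_apply, smul_eq_mul]; ring
  -- the determinant condition from linear dependence
  have hdet : (-(aInv B β v₁) + v₁.1 * (t ^ 2 * B H H) / 2) * (t * dInv B H β v₂ * B H H)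
      = (-(aInv B β v₂) + v₂.1 * (t ^ 2 * B H H) / 2) * (t * dInv B H β v₁ * B H H) := by
    have hz1 := Zst_eq B hB H β hHne t v₁
    have hz2 := Zst_eq B hB H β hHne t v₂
    rw [linearIndependent_fin2] at hdep
    push_neg at hdep
    simp only [Matrix.cons_val_one, Matrix.head_cons, Matrix.cons_val_zero] at hdep
    by_cases hz : Zst B H β t v₂ = 0
    · rw [hz2, Complex.ext_iff] at hz
      obtain ⟨hre0, him0⟩ := hz
      simp only [Complex.add_re, Complex.add_im, Complex.mul_re, Complex.mul_im,
        Complex.ratCast_re, Complex.ratCast_im, Complex.I_re, Complex.I_im,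
        Complex.zero_re, Complex.zero_im, mul_zero, mul_one, zero_mul, sub_zero,
        add_zero, zero_add] at hre0 him0
      have him0' : t * dInv B H β v₂ * B H H = 0 := by exact_mod_cast him0
      have hre0' : -(aInv B β v₂) + v₂.1 * (t ^ 2 * B H H) / 2 = 0 := by exact_mod_cast hre0
      rw [him0', hre0']; ring
    · obtain ⟨c, hc⟩ := hdep hz
      rw [hz1, hz2, Complex.real_smul] at hc
      have hre := congrArg Complex.re hc
      have him := congrArg Complex.im hc
      simp only [Complex.add_re, Complex.add_im, Complex.mul_re, Complex.mul_im,
        Complex.ofReal_re, Complex.ofReal_im, Complex.ratCast_re, Complex.ratCast_im,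
        Complex.I_re, Complex.I_im, mul_zero, mul_one, zero_mul, sub_zero, add_zero,
        zero_add, zero_sub, neg_zero] at hre him
      have hR : (((-(aInv B β v₁) + v₁.1 * (t ^ 2 * B H H) / 2)
              * (t * dInv B H β v₂ * B H H) : ℚ) : ℝ)
          = (((-(aInv B β v₂) + v₂.1 * (t ^ 2 * B H H) / 2)
              * (t * dInv B H β v₁ * B H H) : ℚ) : ℝ) := by
        push_cast at hre him ⊢
        linear_combination (-((t : ℝ) * (dInv B H β v₂ : ℝ) * (B H H : ℝ))) * hre
          + (-(aInv B β v₂ : ℝ) + (v₂.1 : ℝ) * ((t : ℝ) ^ 2 * (B H H : ℝ)) / 2) * him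
      exact_mod_cast hR
  have hkey : dInv B H β v₁ * aInv B β v₂ - dInv B H β v₂ * aInv B β v₁
      = (dInv B H β v₁ * v₂.1 - dInv B H β v₂ * v₁.1) * (t ^ 2 * B H H) / 2 := by
    have htB : (t * B H H) ≠ 0 := mul_ne_zero (ne_of_gt ht) hHne
    have h' : (-(aInv B β v₁) + v₁.1 * (t ^ 2 * B H H) / 2) * dInv B H β v₂
        = (-(aInv B β v₂) + v₂.1 * (t ^ 2 * B H H) / 2) * dInv B H β v₁ := by
      apply mul_left_cancel₀ htB
      linear_combination hdet
    linear_combination h'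
  have hp11 := mpair_decomp B hB H β hHne v₁ v₁
  have hp22 := mpair_decomp B hB H β hHne v₂ v₂
  have hp12 := mpair_decomp B hB H β hHne v₁ v₂
  have hexp : B (dInv B H β v₁ • DInv B H β v₂ - dInv B H β v₂ • DInv B H β v₁)
        (dInv B H β v₁ • DInv B H β v₂ - dInv B H β v₂ • DInv B H β v₁)
      = dInv B H β v₁ ^ 2 * B (DInv B H β v₂) (DInv B H β v₂)
        - 2 * dInv B H β v₁ * dInv B H β v₂ * B (DInv B H β v₁) (DInv B H β v₂)
        + dInv B H β v₂ ^ 2 * B (DInv B H β v₁) (DInv B H β v₁) := by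
    simp only [map_sub, map_smul, LinearMap.sub_apply, LinearMap.smul_apply, smul_eq_mul]
    linear_combination (-(dInv B H β v₁) * dInv B H β v₂) * hB (DInv B H β v₂) (DInv B H β v₁)
  have hid : mpair B v₁ v₂ * (dInv B H β v₁ * dInv B H β v₂)
      = -(B (dInv B H β v₁ • DInv B H β v₂ - dInv B H β v₂ • DInv B H β v₁)
            (dInv B H β v₁ • DInv B H β v₂ - dInv B H β v₂ • DInv B H β v₁)) / 2
        + dInv B H β v₂ ^ 2 * mpair B v₁ v₁ / 2
        + dInv B H β v₁ ^ 2 * mpair B v₂ v₂ / 2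
        + (dInv B H β v₁ * rInv B v₂ - dInv B H β v₂ * rInv B v₁) ^ 2
            * B (t • H) (t • H) / 2 := by
    rw [hexp, h4, rInv_eq, rInv_eq]
    linear_combination (dInv B H β v₁ * dInv B H β v₂) * hp12
      - (dInv B H β v₂ ^ 2 / 2) * hp11 - (dInv B H β v₁ ^ 2 / 2) * hp22
      + (dInv B H β v₁ * v₂.1 - dInv B H β v₂ * v₁.1) * hkey
  -- nonnegativity facts
  have hx_orth : B (dInv B H β v₁ • DInv B H β v₂ - dInv B H β v₂ • DInv B H β v₁) H = 0 := by
    have o1 := DInv_orth B hB H β hHne v₁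
    have o2 := DInv_orth B hB H β hHne v₂
    simp only [map_sub, map_smul, LinearMap.sub_apply, LinearMap.smul_apply, smul_eq_mul,
      o1, o2]
    ring
  have hxx : B (dInv B H β v₁ • DInv B H β v₂ - dInv B H β v₂ • DInv B H β v₁)
      (dInv B H β v₁ • DInv B H β v₂ - dInv B H β v₂ • DInv B H β v₁) ≤ 0 := by
    rcases eq_or_ne (dInv B H β v₁ • DInv B H β v₂ - dInv B H β v₂ • DInv B H β v₁) 0 with h | h
    · simp [h]
    · exact le_of_lt (hneg _ hx_orth h)
  have hT2 : 0 ≤ dInv B H β v₂ ^ 2 * mpair B v₁ v₁ := mul_nonneg (sq_nonneg _) hsq1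
  have hT3 : 0 ≤ dInv B H β v₁ ^ 2 * mpair B v₂ v₂ := mul_nonneg (sq_nonneg _) hsq2
  have hω : 0 < B (t • H) (t • H) := by rw [h4]; positivity
  have hT4 : 0 ≤ (dInv B H β v₁ * rInv B v₂ - dInv B H β v₂ * rInv B v₁) ^ 2
      * B (t • H) (t • H) := mul_nonneg (sq_nonneg _) (le_of_lt hω)
  refine ⟨hid, ?_, ?_⟩
  · rw [hid]; linarith
  · intro h0
    rw [h0] at hid
    have hBxx : B (dInv B H β v₁ • DInv B H β v₂ - dInv B H β v₂ • DInv B H β v₁)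
        (dInv B H β v₁ • DInv B H β v₂ - dInv B H β v₂ • DInv B H β v₁) = 0 := by linarith
    have hx0 : dInv B H β v₁ • DInv B H β v₂ - dInv B H β v₂ • DInv B H β v₁ = 0 := by
      by_contra h
      exact absurd hBxx (ne_of_lt (hneg _ hx_orth h))
    have hc4 : (dInv B H β v₁ * rInv B v₂ - dInv B H β v₂ * rInv B v₁) ^ 2
        * B (t • H) (t • H) = 0 := by linarith
    have hr : dInv B H β v₁ * v₂.1 = dInv B H β v₂ * v₁.1 := by
      have h5 : (dInv B H β v₁ * rInv B v₂ - dInv B H β v₂ * rInv B v₁) ^ 2 = 0 :=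
        (mul_eq_zero.mp hc4).resolve_right (ne_of_gt hω)
      rw [rInv_eq, rInv_eq] at h5
      have := pow_eq_zero_iff (two_ne_zero) |>.mp h5
      linarith [this]
    have ha0 : dInv B H β v₁ * aInv B β v₂ - dInv B H β v₂ * aInv B β v₁ = 0 := by
      rw [hkey]
      rw [show dInv B H β v₁ * v₂.1 - dInv B H β v₂ * v₁.1 = 0 by linarith [hr]]
      ring
    have hm : ∀ v : ℚ × N × ℚ, v.2.1 = DInv B H β v + v.1 • β + dInv B H β v • H := by
      intro v; simp only [DInv, rInv_eq]; abel
    rw [sub_eq_zero] at hx0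
    have hN : dInv B H β v₁ • v₂.2.1 = dInv B H β v₂ • v₁.2.1 := by
      rw [hm v₂, hm v₁, smul_add, smul_add, smul_add, smul_add, hx0, smul_smul, smul_smul,
        smul_smul, smul_smul, hr, mul_comm (dInv B H β v₁) (dInv B H β v₂)]
    have hS : dInv B H β v₁ * v₂.2.2 = dInv B H β v₂ * v₁.2.2 := by
      have e1 := aInv_eq B β v₁
      have e2 := aInv_eq B β v₂
      have hBN : dInv B H β v₁ * B v₂.2.1 β = dInv B H β v₂ * B v₁.2.1 β := by
        have := congrArg (fun n => B n β) hN
        simpa [map_smul, smul_eq_mul] using this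
      linear_combination -(dInv B H β v₁) * e2 + dInv B H β v₂ * e1 + ha0 + hBN
        - (B β β / 2) * hr
    refine Prod.ext ?_ (Prod.ext ?_ ?_)
    · simpa [smul_eq_mul] using hr
    · simpa using hN
    · simpa [smul_eq_mul] using hS
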